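/- Let x̂ ∈ ℝⁿ, A ∈ ℝ^{m×n}, b ∈ ℝᵐ, index sets Jᵢ, fixed nonnegative αᵢⱼ, and for each i let Γ̲ᵢ be the unique budget making constraint i active at x̂ when the nominal surplus satisfies 0 ≤ Σⱼaᵢⱼx̂ⱼ − bᵢ ≤ Σ_{j∈Jᵢ}αᵢⱼ|x̂ⱼ| (i ∈ Î), and let Θ = {Γ : Γᵢ ∈ [0, Γ̲ᵢ] for i ∈ Î, Γᵢ ∈ [0, |Jᵢ|] for i ∉ Î}. If Σⱼaᵢⱼx̂ⱼ ≥ bᵢ for all i and Γ ∈ Θ, then there exist (u, y, z) with: αᵢⱼx̂ⱼ + uᵢⱼ ≥ 0, −αᵢⱼx̂ⱼ + uᵢⱼ ≥ 0, yᵢⱼ + z ᵢ ≥ uᵢⱼ, Σⱼaᵢⱼx̂ⱼ − Σ_{j∈Jᵢ}yᵢⱼ − Γᵢzᵢ ≥ bᵢ, and yᵢⱼ, zᵢ ≥ 0 for all j ∈ Jᵢ, i. Conversely, if such (u, y, z) exist for Γ ∈ [0,|Jᵢ|]ᵐ, then Γ ∈ Θ. -/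

import Mathlib

set_option maxHeartbeats 1000000

/-- Protection function of a cardinality constrained uncertainty set, as the optimal
value of the continuous knapsack problem with budget Γ. -/
noncomputable def prot {n : ℕ} (J : Finset (Fin n)) (w : Fin n → ℝ) (Γ : ℝ) : ℝ :=
  sSup {v | ∃ φ : Fin n → ℝ, (∀ j ∈ J, 0 ≤ φ j ∧ φ j ≤ 1) ∧
    (∑ j ∈ J, φ j ≤ Γ) ∧ v = ∑ j ∈ J, w j * φ j}

namespace ProtAux

def protSet {n : ℕ} (J : Finset (Fin n)) (w : Fin n → ℝ) (Γ : ℝ) : Set ℝ :=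
  {v | ∃ φ : Fin n → ℝ, (∀ j ∈ J, 0 ≤ φ j ∧ φ j ≤ 1) ∧
    (∑ j ∈ J, φ j ≤ Γ) ∧ v = ∑ j ∈ J, w j * φ j}

lemma prot_eq {n : ℕ} (J : Finset (Fin n)) (w : Fin n → ℝ) (Γ : ℝ) :
    prot J w Γ = sSup (protSet J w Γ) := rfl

lemma zero_mem_protSet {n : ℕ} {J : Finset (Fin n)} {w : Fin n → ℝ} {Γ : ℝ} (hΓ : 0 ≤ Γ) :
    (0:ℝ) ∈ protSet J w Γ :=
  ⟨0, fun j _ => ⟨le_rfl, zero_le_one⟩, by simpa using hΓ, by simp⟩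

lemma protSet_bddAbove {n : ℕ} {J : Finset (Fin n)} {w : Fin n → ℝ} (hw : ∀ j ∈ J, 0 ≤ w j)
    (Γ : ℝ) : BddAbove (protSet J w Γ) := by
  refine ⟨∑ j ∈ J, w j, ?_⟩
  rintro v ⟨φ, hφ, _, rfl⟩
  refine Finset.sum_le_sum fun j hj => ?_
  have h1 := (hφ j hj).1
  have h2 := (hφ j hj).2
  have h3 := hw j hj
  nlinarith

lemma prot_nonneg {n : ℕ} {J : Finset (Fin n)} {w : Fin n → ℝ} (hw : ∀ j ∈ J, 0 ≤ w j)
    {Γ : ℝ} (hΓ : 0 ≤ Γ) : 0 ≤ prot J w Γ :=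
  le_csSup (protSet_bddAbove hw Γ) (zero_mem_protSet hΓ)

lemma prot_le_sum {n : ℕ} {J : Finset (Fin n)} {w : Fin n → ℝ} (hw : ∀ j ∈ J, 0 ≤ w j)
    (Γ : ℝ) : prot J w Γ ≤ ∑ j ∈ J, w j := by
  apply Real.sSup_le
  · rintro v ⟨φ, hφ, _, rfl⟩
    refine Finset.sum_le_sum fun j hj => ?_
    have h1 := (hφ j hj).1
    have h2 := (hφ j hj).2
    have h3 := hw j hj
    nlinarith
  · exact Finset.sum_nonneg hw

lemma prot_mono {n : ℕ} {J : Finset (Fin n)} {w : Fin n → ℝ} (hw : ∀ j ∈ J, 0 ≤ w j)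
    {Γ₁ Γ₂ : ℝ} (h0 : 0 ≤ Γ₁) (h12 : Γ₁ ≤ Γ₂) : prot J w Γ₁ ≤ prot J w Γ₂ := by
  apply csSup_le_csSup (protSet_bddAbove hw Γ₂) ⟨0, zero_mem_protSet h0⟩
  rintro v ⟨φ, hφ, hsum, rfl⟩
  exact ⟨φ, hφ, hsum.trans h12, rfl⟩

/-- weak duality -/
lemma prot_le_dual {n : ℕ} {J : Finset (Fin n)} {w : Fin n → ℝ} {Γ : ℝ}
    {y : Fin n → ℝ} {z : ℝ} (hΓ : 0 ≤ Γ)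
    (hy : ∀ j ∈ J, 0 ≤ y j) (hz : 0 ≤ z) (hcov : ∀ j ∈ J, w j ≤ y j + z) :
    prot J w Γ ≤ (∑ j ∈ J, y j) + Γ * z := by
  apply Real.sSup_le
  · rintro v ⟨φ, hφ, hsum, rfl⟩
    have key : ∑ j ∈ J, w j * φ j ≤ (∑ j ∈ J, y j) + (∑ j ∈ J, φ j) * z := by
      rw [Finset.sum_mul, ← Finset.sum_add_distrib]
      refine Finset.sum_le_sum fun j hj => ?_
      have h1 := (hφ j hj).1
      have h2 := (hφ j hj).2
      have h3 := hy j hj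
      have h4 := hcov j hj
      nlinarith
    have : (∑ j ∈ J, φ j) * z ≤ Γ * z := mul_le_mul_of_nonneg_right hsum hz
    linarith
  · have := Finset.sum_nonneg hy
    nlinarith

/-- strong-duality-style construction of a good dual z, by induction on the card of J -/
lemma exists_z {n : ℕ} : ∀ (k : ℕ) (J : Finset (Fin n)) (w : Fin n → ℝ), J.card ≤ k →
    (∀ j, 0 ≤ w j) → ∀ Γ : ℝ, 0 ≤ Γ → Γ ≤ (J.card : ℝ) →
    ∃ z : ℝ, 0 ≤ z ∧ ((J = ∅ ∧ z = 0) ∨ ∃ j ∈ J, z ≤ w j) ∧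
      (∑ j ∈ J, max (w j - z) 0) + Γ * z ≤ prot J w Γ := by
  intro k
  induction k with
  | zero =>
    intro J w hcard hw Γ hΓ0 hΓJ
    have hJ : J = ∅ := Finset.card_eq_zero.mp (Nat.le_zero.mp hcard)
    subst hJ
    refine ⟨0, le_rfl, Or.inl ⟨rfl, rfl⟩, ?_⟩
    simp only [Finset.sum_empty, mul_zero, add_zero, zero_add]
    exact prot_nonneg (fun j hj => hw j) hΓ0
  | succ k ih =>
    intro J w hcard hw Γ hΓ0 hΓJ
    by_cases h1 : 1 ≤ Γ
    · -- Γ ≥ 1 : recurse after removing a maximizer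
      have hJne : J.Nonempty := by
        rw [← Finset.card_pos]
        by_contra h
        push_neg at h
        interval_cases h' : J.card <;> simp_all <;> linarith
      obtain ⟨j0, hj0J, hj0max⟩ := J.exists_max_image w hJne
      set J' := J.erase j0 with hJ'
      have hcard' : J'.card = J.card - 1 := Finset.card_erase_of_mem hj0J
      have hcpos : 1 ≤ J.card := Finset.card_pos.mpr hJne
      have hcast : (J'.card : ℝ) = (J.card : ℝ) - 1 := by
        rw [hcard']; push_cast [hcpos]; ring
      obtain ⟨z, hz0, hzcase, hzle⟩ := ih J' w
        (by omega) hw (Γ - 1) (by linarith) (by rw [hcast]; linarith)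
      have hzj0 : z ≤ w j0 := by
        rcases hzcase with ⟨-, rfl⟩ | ⟨j1, hj1, hz1⟩
        · exact hw j0
        · exact hz1.trans (hj0max j1 (Finset.mem_of_mem_erase hj1))
      refine ⟨z, hz0, Or.inr ⟨j0, hj0J, hzj0⟩, ?_⟩
      have hsplit : ∑ j ∈ J, max (w j - z) 0
          = max (w j0 - z) 0 + ∑ j ∈ J', max (w j - z) 0 :=
        (Finset.add_sum_erase J _ hj0J).symm
      have hmax : max (w j0 - z) 0 = w j0 - z := max_eq_left (by linarith)
      -- prot J w Γ ≥ w j0 + prot J' w (Γ-1)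
      have hbdd := protSet_bddAbove (J := J) (w := w) (fun j _ => hw j) Γ
      have hext : ∀ v' ∈ protSet J' w (Γ - 1), v' + w j0 ∈ protSet J w Γ := by
        rintro v' ⟨φ, hφ, hsum, rfl⟩
        refine ⟨Function.update φ j0 1, ?_, ?_, ?_⟩
        · intro j hj
          by_cases hjj : j = j0
          · subst hjj; simp
          · rw [Function.update_of_ne hjj]
            exact hφ j (Finset.mem_erase.mpr ⟨hjj, hj⟩)
        · rw [← Finset.add_sum_erase J _ hj0J, Function.update_self]
          have : ∑ j ∈ J', Function.update φ j0 1 j = ∑ j ∈ J', φ j := by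
            refine Finset.sum_congr rfl fun j hj => ?_
            exact Function.update_of_ne (Finset.ne_of_mem_erase hj) _ _
          rw [← hJ', this]; linarith
        · rw [← Finset.add_sum_erase J _ hj0J, Function.update_self, mul_one]
          have : ∑ j ∈ J', w j * Function.update φ j0 1 j = ∑ j ∈ J', w j * φ j := by
            refine Finset.sum_congr rfl fun j hj => ?_
            rw [Function.update_of_ne (Finset.ne_of_mem_erase hj)]
          rw [← hJ', this]; ring
      have hprot : prot J' w (Γ - 1) ≤ prot J w Γ - w j0 := by
        apply csSup_le ⟨0, zero_mem_protSet (by linarith)⟩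
        intro v' hv'
        have : v' + w j0 ≤ prot J w Γ := le_csSup hbdd (hext v' hv')
        linarith
      rw [hsplit, hmax]
      have := hzle
      linarith
    · -- Γ < 1
      push_neg at h1
      rcases J.eq_empty_or_nonempty with hJe | hJne
      · subst hJe
        refine ⟨0, le_rfl, Or.inl ⟨rfl, rfl⟩, ?_⟩
        simp only [Finset.sum_empty, mul_zero, add_zero, zero_add]
        exact prot_nonneg (fun j _ => hw j) hΓ0
      · obtain ⟨j0, hj0J, hj0max⟩ := J.exists_max_image w hJne
        refine ⟨w j0, hw j0, Or.inr ⟨j0, hj0J, le_rfl⟩, ?_⟩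
        have hzero : ∑ j ∈ J, max (w j - w j0) 0 = 0 := by
          refine Finset.sum_eq_zero fun j hj => max_eq_right (by
            have := hj0max j hj; linarith)
        rw [hzero, zero_add]
        have hmem : Γ * w j0 ∈ protSet J w Γ := by
          refine ⟨Function.update 0 j0 Γ, ?_, ?_, ?_⟩
          · intro j hj
            by_cases hjj : j = j0
            · subst hjj; simp [hΓ0, h1.le]
            · rw [Function.update_of_ne hjj]; simp
          · rw [Finset.sum_eq_single_of_mem j0 hj0J]
            · simp
            · intro j _ hjj; rw [Function.update_of_ne hjj]; rfl
          · rw [Finset.sum_eq_single_of_mem j0 hj0J]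
            · simp [mul_comm]
            · intro j _ hjj; rw [Function.update_of_ne hjj]; simp
        exact le_csSup (protSet_bddAbove (fun j _ => hw j) Γ) hmem

end ProtAux

open ProtAux in
/-- Primal feasibility of the linearized Bertsimas–Sim robust counterpart at xh is
characterized by the budget box Θ defined via the critical budgets Γ̲ᵢ. -/
theorem stmt_18 {n m : ℕ} (xh : Fin n → ℝ) (A : Matrix (Fin m) (Fin n) ℝ)
    (b : Fin m → ℝ) (J : Fin m → Finset (Fin n)) (α : Fin m → Fin n → ℝ)
    (hα : ∀ i j, 0 ≤ α i j)
    (Ihat : Finset (Fin m))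
    (hIhat : ∀ i, i ∈ Ihat ↔ (0 ≤ (∑ j, A i j * xh j) - b i ∧
        (∑ j, A i j * xh j) - b i ≤ ∑ j ∈ J i, α i j * |xh j|))
    (Γlow : Fin m → ℝ)
    (hΓlow_mem : ∀ i ∈ Ihat, 0 ≤ Γlow i ∧ Γlow i ≤ ((J i).card : ℝ))
    (hΓlow_act : ∀ i ∈ Ihat,
        prot (J i) (fun j => α i j * |xh j|) (Γlow i) = (∑ j, A i j * xh j) - b i)
    (hΓlow_unique : ∀ i ∈ Ihat, ∀ Γ ∈ Set.Icc (0 : ℝ) ((J i).card : ℝ),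
        prot (J i) (fun j => α i j * |xh j|) Γ = (∑ j, A i j * xh j) - b i → Γ = Γlow i)
    (Γ : Fin m → ℝ) :
    (((∀ i, ∑ j, A i j * xh j ≥ b i) ∧
      (∀ i ∈ Ihat, 0 ≤ Γ i ∧ Γ i ≤ Γlow i) ∧
      (∀ i ∉ Ihat, 0 ≤ Γ i ∧ Γ i ≤ ((J i).card : ℝ))) →
      ∃ (u y : Fin m → Fin n → ℝ) (z : Fin m → ℝ),
        (∀ i, ∀ j ∈ J i, α i j * xh j + u i j ≥ 0) ∧
        (∀ i, ∀ j ∈ J i, -(α i j) * xh j + u i j ≥ 0) ∧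
        (∀ i, ∀ j ∈ J i, y i j + z i ≥ u i j) ∧
        (∀ i, (∑ j, A i j * xh j) - (∑ j ∈ J i, y i j) - Γ i * z i ≥ b i) ∧
        (∀ i, ∀ j ∈ J i, 0 ≤ y i j) ∧ (∀ i, 0 ≤ z i)) ∧
    (((∀ i, 0 ≤ Γ i ∧ Γ i ≤ ((J i).card : ℝ)) ∧
      ∃ (u y : Fin m → Fin n → ℝ) (z : Fin m → ℝ),
        (∀ i, ∀ j ∈ J i, α i j * xh j + u i j ≥ 0) ∧
        (∀ i, ∀ j ∈ J i, -(α i j) * xh j + u i j ≥ 0) ∧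
        (∀ i, ∀ j ∈ J i, y i j + z i ≥ u i j) ∧
        (∀ i, (∑ j, A i j * xh j) - (∑ j ∈ J i, y i j) - Γ i * z i ≥ b i) ∧
        (∀ i, ∀ j ∈ J i, 0 ≤ y i j) ∧ (∀ i, 0 ≤ z i)) →
      ((∀ i ∈ Ihat, 0 ≤ Γ i ∧ Γ i ≤ Γlow i) ∧
       (∀ i ∉ Ihat, 0 ≤ Γ i ∧ Γ i ≤ ((J i).card : ℝ)))) := by
  set w : Fin m → Fin n → ℝ := fun i j => α i j * |xh j| with hw_def
  have hwnn : ∀ i j, 0 ≤ w i j := fun i j => mul_nonneg (hα i j) (abs_nonneg _)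
  constructor
  · rintro ⟨hs, hΓin, hΓout⟩
    have hΓ0 : ∀ i, 0 ≤ Γ i := fun i => by
      by_cases h : i ∈ Ihat
      · exact (hΓin i h).1
      · exact (hΓout i h).1
    have hΓc : ∀ i, Γ i ≤ ((J i).card : ℝ) := fun i => by
      by_cases h : i ∈ Ihat
      · exact le_trans (hΓin i h).2 (hΓlow_mem i h).2
      · exact (hΓout i h).2
    have hkey : ∀ i, ∃ z : ℝ, 0 ≤ z ∧ ((J i = ∅ ∧ z = 0) ∨ ∃ j ∈ J i, z ≤ w i j) ∧
        (∑ j ∈ J i, max (w i j - z) 0) + Γ i * z ≤ prot (J i) (w i) (Γ i) := fun i =>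
      exists_z (J i).card (J i) (w i) le_rfl (hwnn i) (Γ i) (hΓ0 i) (hΓc i)
    choose z hz0 _ hzle using hkey
    refine ⟨fun i j => w i j, fun i j => max (w i j - z i) 0, z, ?_, ?_, ?_, ?_, ?_, ?_⟩
    · intro i j hj
      have := mul_le_mul_of_nonneg_left (neg_abs_le (xh j)) (hα i j)
      simp only [hw_def, ge_iff_le, mul_neg] at *
      linarith
    · intro i j hj
      have := mul_le_mul_of_nonneg_left (le_abs_self (xh j)) (hα i j)
      simp only [hw_def, ge_iff_le, neg_mul] at *
      linarith
    · intro i j hj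
      have := le_max_left (w i j - z i) 0
      simp only [ge_iff_le]
      linarith
    · intro i
      have hub : prot (J i) (w i) (Γ i) ≤ (∑ j, A i j * xh j) - b i := by
        by_cases h : i ∈ Ihat
        · have hmono := prot_mono (J := J i) (w := w i) (fun j _ => hwnn i j)
            (hΓ0 i) (hΓin i h).2
          have hact := hΓlow_act i h
          calc prot (J i) (w i) (Γ i) ≤ prot (J i) (w i) (Γlow i) := hmono
            _ = (∑ j, A i j * xh j) - b i := hact
        · have hsurp : 0 ≤ (∑ j, A i j * xh j) - b i := by
            have := hs i; simp only [ge_iff_le] at this; linarith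
          have hgt : ∑ j ∈ J i, w i j < (∑ j, A i j * xh j) - b i := by
            by_contra hc
            push_neg at hc
            exact h ((hIhat i).mpr ⟨hsurp, hc⟩)
          exact (prot_le_sum (fun j _ => hwnn i j) (Γ i)).trans hgt.le
      have := hzle i
      simp only [ge_iff_le]
      linarith
    · intro i j _; exact le_max_right _ _
    · exact hz0
  · rintro ⟨hΓbox, u, y, z, h1, h2, h3, h4, h5, h6⟩
    refine ⟨?_, fun i _ => hΓbox i⟩
    intro i hi
    refine ⟨(hΓbox i).1, ?_⟩
    have hcov : ∀ j ∈ J i, w i j ≤ y i j + z i := by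
      intro j hj
      have ha := h1 i j hj
      have hb := h2 i j hj
      have hc := h3 i j hj
      simp only [ge_iff_le, neg_mul] at ha hb hc
      show α i j * |xh j| ≤ y i j + z i
      rcases le_total 0 (xh j) with hx | hx
      · rw [abs_of_nonneg hx]; linarith
      · rw [abs_of_nonpos hx]; linarith
    have hweak : prot (J i) (w i) (Γ i) ≤ (∑ j ∈ J i, y i j) + Γ i * z i :=
      prot_le_dual (hΓbox i).1 (h5 i) (h6 i) hcov
    have hle : prot (J i) (w i) (Γ i) ≤ (∑ j, A i j * xh j) - b i := by
      have := h4 i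
      simp only [ge_iff_le] at this
      linarith
    by_contra hgt
    push_neg at hgt
    have hmono : prot (J i) (w i) (Γlow i) ≤ prot (J i) (w i) (Γ i) :=
      prot_mono (fun j _ => hwnn i j) (hΓlow_mem i hi).1 hgt.le
    have heq : prot (J i) (w i) (Γ i) = (∑ j, A i j * xh j) - b i :=
      le_antisymm hle (by rw [← hΓlow_act i hi]; exact hmono)
    have := hΓlow_unique i hi (Γ i) ⟨(hΓbox i).1, (hΓbox i).2⟩ heq
    linarith
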